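/- For nonnegative integers 0 ≤ t < q and a positive integer m, one has ∑_{k=t}^{q-1} (-1)^{k-t} C(k,t) C(-m,k) = (-1)^t C(m+t-1, t) C(q+m-1, q-1-t), where C(-m,k) = (-1)^k C(m+k-1, k). -/

import Mathlib

lemma stmt5_nat (t q m : ℕ) (htq : t < q) (hm : 1 ≤ m) :
    (∑ k ∈ Finset.Icc t (q - 1), k.choose t * (m + k - 1).choose k)
      = (m + t - 1).choose t * (q + m - 1).choose (q - 1 - t) := by
  have hterm : ∀ k ∈ Finset.Icc t (q - 1),
      k.choose t * (m + k - 1).choose k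
        = (m + t - 1).choose t * (m + k - 1).choose (m + t - 1) := by
    intro k hk
    simp only [Finset.mem_Icc] at hk
    have htk : t ≤ k := hk.1
    have h1 : k ≤ m + k - 1 := by omega
    have h2 : k - t ≤ k := Nat.sub_le _ _
    have e1 : m + k - 1 - (k - t) = m + t - 1 := by omega
    have e2 : k - (k - t) = t := by omega
    have e3 : (m + k - 1).choose (k - t) = (m + k - 1).choose (m + t - 1) := by
      rw [← e1]
      exact (Nat.choose_symm (by omega : k - t ≤ m + k - 1)).symm
    calc k.choose t * (m + k - 1).choose k
        = (m + k - 1).choose k * k.choose (k - t) := by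
          rw [Nat.choose_symm htk, mul_comm]
      _ = (m + k - 1).choose (k - t) * (m + k - 1 - (k - t)).choose (k - (k - t)) :=
          Nat.choose_mul h2
      _ = (m + t - 1).choose t * (m + k - 1).choose (m + t - 1) := by
          rw [e1, e2, e3, mul_comm]
  rw [Finset.sum_congr rfl hterm, ← Finset.mul_sum]
  congr 1
  have hmap : ∑ k ∈ Finset.Icc t (q - 1), (m + k - 1).choose (m + t - 1)
      = ∑ i ∈ Finset.Icc (t + (m - 1)) (q - 1 + (m - 1)), i.choose (m + t - 1) := by
    rw [← Finset.map_add_right_Icc, Finset.sum_map]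
    refine Finset.sum_congr rfl fun k _ => ?_
    congr 1
    simp [addRightEmbedding]
    omega
  rw [hmap]
  have e : t + (m - 1) = m + t - 1 := by omega
  rw [e, Nat.sum_Icc_choose]
  have e4 : q - 1 + (m - 1) + 1 = q + m - 1 := by omega
  rw [e4, ← Nat.choose_symm (by omega : m + t - 1 + 1 ≤ q + m - 1)]
  congr 1
  omega

/-- For `0 ≤ t < q` and a positive integer `m`,
`∑_{k=t}^{q-1} (-1)^{k-t} C(k,t) C(-m,k) = (-1)^t C(m+t-1,t) C(q+m-1, q-1-t)`,
where `C(-m,k) = (-1)^k C(m+k-1,k)`. Exact integer identity. -/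
theorem stmt_5 (t q m : ℕ) (htq : t < q) (hm : 1 ≤ m) :
    (∑ k ∈ Finset.Icc t (q - 1),
        (-1) ^ (k - t) * (k.choose t : ℤ) * ((-1) ^ k * ((m + k - 1).choose k : ℤ)))
      = (-1) ^ t * ((m + t - 1).choose t : ℤ) * ((q + m - 1).choose (q - 1 - t) : ℤ) := by
  have hterm : ∀ k ∈ Finset.Icc t (q - 1),
      (-1) ^ (k - t) * (k.choose t : ℤ) * ((-1) ^ k * ((m + k - 1).choose k : ℤ))
        = (-1) ^ t * ((k.choose t : ℤ) * ((m + k - 1).choose k : ℤ)) := by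
    intro k hk
    simp only [Finset.mem_Icc] at hk
    have hsign : (-1 : ℤ) ^ (k - t) * (-1) ^ k = (-1) ^ t := by
      rw [← pow_add]
      have : k - t + k = 2 * (k - t) + t := by omega
      rw [this, pow_add, pow_mul]
      norm_num
    calc (-1 : ℤ) ^ (k - t) * (k.choose t : ℤ) * ((-1) ^ k * ((m + k - 1).choose k : ℤ))
        = ((-1) ^ (k - t) * (-1) ^ k) * ((k.choose t : ℤ) * ((m + k - 1).choose k : ℤ)) := by
          ring
      _ = (-1) ^ t * ((k.choose t : ℤ) * ((m + k - 1).choose k : ℤ)) := by rw [hsign]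
  rw [Finset.sum_congr rfl hterm, ← Finset.mul_sum, mul_assoc]
  congr 1
  exact_mod_cast congrArg (Nat.cast : ℕ → ℤ) (stmt5_nat t q m htq hm)
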